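/- Let P and Q be mutually absolutely continuous probability measures with finite symmetrized Kullback-Leibler divergence, and let X be a random variable with finite variance under both. Then (E_P[X]-E_Q[X])² · (1/(KL(P,Q)+KL(Q,P)) - 1/4) ≤ max(Var_P(X), Var_Q(X)). -/

import Mathlib

open MeasureTheory ProbabilityTheory
open scoped ENNReal NNReal

lemma aux_log_lower {x : ℝ} (hx : 1 ≤ x) : 2*(x-1)/(x+1) ≤ Real.log x := by
  set f : ℝ → ℝ := fun y => Real.log y + 4*(y+1)⁻¹ with hf
  have hderiv : ∀ y ∈ interior (Set.Ici (1:ℝ)), HasDerivAt f (y⁻¹ + 4 * (-1/(y+1)^2)) y := by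
    intro y hy
    rw [interior_Ici] at hy
    have hy1 : (1:ℝ) < y := hy
    have hy0 : y ≠ 0 := by positivity
    have hy1' : y + 1 ≠ 0 := by positivity
    have h1 : HasDerivAt Real.log y⁻¹ y := Real.hasDerivAt_log hy0
    have h2 : HasDerivAt (fun z : ℝ => (z+1)⁻¹) (-1/(y+1)^2) y := by
      exact ((hasDerivAt_id' y).add_const 1).inv hy1'
    exact h1.add (h2.const_mul 4)
  have hmono : MonotoneOn f (Set.Ici (1:ℝ)) := by
    apply monotoneOn_of_deriv_nonneg (convex_Ici 1)
    · apply ContinuousOn.add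
      · exact Real.continuousOn_log.mono (by intro y hy; simp at hy ⊢; intro h; linarith)
      · apply ContinuousOn.mul continuousOn_const
        apply ContinuousOn.inv₀ (by fun_prop)
        intro y hy; simp at hy; intro h; linarith
    · intro y hy
      exact (hderiv y hy).differentiableAt.differentiableWithinAt
    · intro y hy
      rw [(hderiv y hy).deriv]
      rw [interior_Ici] at hy
      have hy1 : (1:ℝ) < y := hy
      have h1 : 4/(y+1)^2 ≤ 1/y := by
        rw [div_le_div_iff₀ (by positivity) (by positivity)]
        nlinarith
      have : (4:ℝ) * (-1/(y+1)^2) = -(4/(y+1)^2) := by ring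
      rw [this]
      rw [← one_div]
      linarith
  have h1 : f 1 ≤ f x := hmono (by simp) hx hx
  have hx1 : (0:ℝ) < x + 1 := by linarith
  simp only [hf, Real.log_one] at h1
  rw [div_le_iff₀ hx1]
  have h4 : (4:ℝ)*(x+1)⁻¹ = 4/(x+1) := by ring
  rw [h4] at h1
  have h5 : 4/(x+1) * (x+1) = 4 := by field_simp
  nlinarith [h1, mul_le_mul_of_nonneg_right h1 hx1.le]

lemma aux_key' {a b : ℝ} (ha : 0 < a) (hb : 0 < b) (hba : b ≤ a) :
    2*(a-b)^2/(a+b) ≤ (Real.log a - Real.log b)*(a-b) := by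
  have hx : 1 ≤ a/b := (one_le_div hb).mpr hba
  have h1 := aux_log_lower hx
  have hlog : Real.log (a/b) = Real.log a - Real.log b := Real.log_div ha.ne' hb.ne'
  have h2 : 2*(a/b-1)/(a/b+1) = 2*(a-b)/(a+b) := by
    rw [div_eq_div_iff (by positivity) (by positivity)]
    field_simp
  rw [hlog, h2] at h1
  have h3 := mul_le_mul_of_nonneg_right h1 (by linarith : (0:ℝ) ≤ a - b)
  calc 2*(a-b)^2/(a+b) = 2*(a-b)/(a+b) * (a-b) := by ring
    _ ≤ _ := h3

lemma aux_key {a b : ℝ} (ha : 0 ≤ a) (hb : 0 ≤ b) (hab : a = 0 ↔ b = 0) :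
    2*(a-b)^2/(a+b) ≤ Real.log (a/b) * a + Real.log (b/a) * b := by
  rcases ha.eq_or_lt with h | ha'
  · have hb' : b = 0 := hab.mp h.symm
    simp [← h, hb']
  · have hb' : 0 < b := lt_of_le_of_ne hb (fun h => ha'.ne' (hab.mpr h.symm))
    have hlog1 : Real.log (a/b) = Real.log a - Real.log b := Real.log_div ha'.ne' hb'.ne'
    have hlog2 : Real.log (b/a) = Real.log b - Real.log a := Real.log_div hb'.ne' ha'.ne'
    rw [hlog1, hlog2]
    have hr : (Real.log a - Real.log b) * a + (Real.log b - Real.log a) * b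
        = (Real.log a - Real.log b) * (a - b) := by ring
    rw [hr]
    rcases le_total b a with h | h
    · exact aux_key' ha' hb' h
    · have := aux_key' hb' ha' h
      have e1 : 2*(b-a)^2/(b+a) = 2*(a-b)^2/(a+b) := by rw [add_comm b a]; ring_nf
      have e2 : (Real.log b - Real.log a)*(b-a) = (Real.log a - Real.log b)*(a-b) := by ring
      rw [e1, e2] at this; exact this

lemma aux_cs {Ω : Type*} [MeasurableSpace Ω] {ν : Measure Ω} {f g : Ω → ℝ}
    (hm : AEStronglyMeasurable (fun ω => f ω * g ω) ν)
    (hf : Integrable (fun ω => f ω ^ 2) ν) (hg : Integrable (fun ω => g ω ^ 2) ν) :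
    (∫ ω, f ω * g ω ∂ν)^2 ≤ (∫ ω, f ω ^ 2 ∂ν) * (∫ ω, g ω ^ 2 ∂ν) := by
  have hfg : Integrable (fun ω => f ω * g ω) ν := by
    apply (hf.add hg).mono' hm
    filter_upwards with ω
    have := sq_nonneg (|f ω| - |g ω|)
    simp only [Pi.add_apply]
    rw [Real.norm_eq_abs, abs_mul]
    nlinarith [sq_abs (f ω), sq_abs (g ω), abs_nonneg (f ω), abs_nonneg (g ω)]
  set A := ∫ ω, f ω ^ 2 ∂ν with hA
  set B := ∫ ω, f ω * g ω ∂ν with hB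
  set C := ∫ ω, g ω ^ 2 ∂ν with hC
  have key : ∀ t : ℝ, 0 ≤ t^2 * A + 2*t*B + C := by
    intro t
    have he : (fun ω => (t * f ω + g ω)^2)
        = fun ω => t^2 * f ω ^2 + 2*t*(f ω * g ω) + g ω ^2 := by funext ω; ring
    have i1 : Integrable (fun ω => t^2 * f ω ^2) ν := hf.const_mul _
    have i2 : Integrable (fun ω => 2*t*(f ω * g ω)) ν := hfg.const_mul _
    have i12 : Integrable (fun ω => t^2 * f ω ^2 + 2*t*(f ω * g ω)) ν := i1.add i2
    have h0 : 0 ≤ ∫ ω, (t * f ω + g ω)^2 ∂ν :=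
      integral_nonneg fun ω => sq_nonneg _
    have : ∫ ω, (t * f ω + g ω)^2 ∂ν = t^2 * A + 2*t*B + C := by
      rw [he, integral_add i12 hg, integral_add i1 i2,
        integral_const_mul, integral_const_mul]
    linarith [this ▸ h0]
  have hA0 : 0 ≤ A := integral_nonneg fun ω => sq_nonneg _
  have hC0 : 0 ≤ C := integral_nonneg fun ω => sq_nonneg _
  rcases hA0.eq_or_lt with h | hA'
  · suffices hB0 : B = 0 by rw [hB0, ← h]; simp
    by_contra hB0
    have h1 := key (-(C+1)/(2*B))
    rw [← h] at h1
    have h2 : 2 * (-(C+1)/(2*B)) * B = -(C+1) := by field_simp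
    rw [h2] at h1
    simp at h1
    linarith
  · have h1 := key (-B/A)
    have h2 : (-B/A)^2 * A + 2*(-B/A)*B + C = C - B^2/A := by field_simp; ring
    rw [h2] at h1
    have h3 : B^2/A ≤ C := by linarith
    calc B^2 = B^2/A * A := by field_simp
      _ ≤ C * A := mul_le_mul_of_nonneg_right h3 hA0
      _ = A * C := mul_comm _ _

lemma dens_integral {Ω : Type*} [MeasurableSpace Ω] (ν : Measure Ω) {p : Ω → ℝ}
    (hpm : Measurable p) (hp0 : ∀ ω, 0 ≤ p ω) (f : Ω → ℝ) :
    ∫ ω, f ω ∂(ν.withDensity fun ω => ENNReal.ofReal (p ω)) = ∫ ω, p ω * f ω ∂ν := by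
  have h : (fun ω => ENNReal.ofReal (p ω)) = fun ω => (((p ω).toNNReal : ℝ≥0) : ℝ≥0∞) := rfl
  have hm : Measurable fun ω => (p ω).toNNReal := measurable_real_toNNReal.comp hpm
  rw [h, integral_withDensity_eq_integral_smul hm]
  congr 1; funext ω
  rw [NNReal.smul_def, smul_eq_mul, Real.coe_toNNReal _ (hp0 ω)]

lemma dens_integrable {Ω : Type*} [MeasurableSpace Ω] (ν : Measure Ω) {p : Ω → ℝ}
    (hpm : Measurable p) (hp0 : ∀ ω, 0 ≤ p ω) (f : Ω → ℝ) :
    Integrable f (ν.withDensity fun ω => ENNReal.ofReal (p ω))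
      ↔ Integrable (fun ω => p ω * f ω) ν := by
  have h : (fun ω => ENNReal.ofReal (p ω)) = fun ω => (((p ω).toNNReal : ℝ≥0) : ℝ≥0∞) := rfl
  have hm : Measurable fun ω => (p ω).toNNReal := measurable_real_toNNReal.comp hpm
  rw [h, integrable_withDensity_iff_integrable_smul hm]
  constructor <;> intro hh <;> apply hh.congr <;> filter_upwards with ω <;>
    rw [NNReal.smul_def, smul_eq_mul, Real.coe_toNNReal _ (hp0 ω)]

lemma dens_zero {Ω : Type*} [MeasurableSpace Ω] (ν : Measure Ω) {r s : Ω → ℝ}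
    (hrm : Measurable r) (hsm : Measurable s) (hs0 : ∀ ω, 0 ≤ s ω)
    (hac : (ν.withDensity fun ω => ENNReal.ofReal (s ω))
      ≪ ν.withDensity fun ω => ENNReal.ofReal (r ω)) :
    ∀ᵐ ω ∂ν, r ω = 0 → s ω = 0 := by
  have hA : MeasurableSet {ω | r ω = 0} := hrm (measurableSet_singleton 0)
  have h1 : (ν.withDensity fun ω => ENNReal.ofReal (r ω)) {ω | r ω = 0} = 0 := by
    rw [withDensity_apply _ hA]
    calc ∫⁻ ω in {ω | r ω = 0}, ENNReal.ofReal (r ω) ∂ν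
        = ∫⁻ _ in {ω | r ω = 0}, 0 ∂ν := by
          apply setLIntegral_congr_fun hA
          intro ω hω
          have hr : r ω = 0 := hω
          simp [hr]
      _ = 0 := by simp
  have h2 := hac h1
  rw [withDensity_apply _ hA] at h2
  have h3 := (setLIntegral_eq_zero_iff hA (ENNReal.measurable_ofReal.comp hsm)).mp h2
  filter_upwards [h3] with ω hω h0
  have h4 : ENNReal.ofReal (s ω) = 0 := hω h0
  rw [ENNReal.ofReal_eq_zero] at h4
  exact le_antisymm h4 (hs0 ω)

/-- Change-of-expectation inequality via the symmetrized Kullback-Leibler divergence: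
for mutually absolutely continuous `P`, `Q` with densities `p`, `q` w.r.t. `ν` and
finite positive symmetrized KL divergence,
`(E_P[X]-E_Q[X])² (1/(KL(P,Q)+KL(Q,P)) - 1/4) ≤ max(Var_P(X), Var_Q(X))`. -/
theorem stmt2 {Ω : Type*} [MeasurableSpace Ω] (ν P Q : Measure Ω)
    (p q : Ω → ℝ) (hpm : Measurable p) (hqm : Measurable q)
    (hp0 : ∀ ω, 0 ≤ p ω) (hq0 : ∀ ω, 0 ≤ q ω)
    (hP : P = ν.withDensity fun ω => ENNReal.ofReal (p ω))
    (hQ : Q = ν.withDensity fun ω => ENNReal.ofReal (q ω))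
    [IsProbabilityMeasure P] [IsProbabilityMeasure Q]
    (hPQ : P ≪ Q) (hQP : Q ≪ P)
    (hklPQ : Integrable (fun ω => Real.log (p ω / q ω) * p ω) ν)
    (hklQP : Integrable (fun ω => Real.log (q ω / p ω) * q ω) ν)
    (hpos : 0 < (∫ ω, Real.log (p ω / q ω) * p ω ∂ν) +
      ∫ ω, Real.log (q ω / p ω) * q ω ∂ν)
    (X : Ω → ℝ) (hXP : MemLp X 2 P) (hXQ : MemLp X 2 Q) :
    (∫ ω, X ω ∂P - ∫ ω, X ω ∂Q) ^ 2 *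
        (1 / ((∫ ω, Real.log (p ω / q ω) * p ω ∂ν) +
          ∫ ω, Real.log (q ω / p ω) * q ω ∂ν) - 1 / 4) ≤
      max (variance X P) (variance X Q) := by
  set S := (∫ ω, Real.log (p ω / q ω) * p ω ∂ν) +
      ∫ ω, Real.log (q ω / p ω) * q ω ∂ν with hSdef
  set μ1 := ∫ ω, X ω ∂P with hμ1
  set μ2 := ∫ ω, X ω ∂Q with hμ2
  set c : ℝ := (μ1 + μ2)/2 with hc
  set u : Ω → ℝ := fun ω => X ω - c with hudef
  -- basic integrabilities under P, Q
  have hXint_P : Integrable X P := hXP.integrable one_le_two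
  have hXint_Q : Integrable X Q := hXQ.integrable one_le_two
  have huP : MemLp u 2 P := hXP.sub (memLp_const c)
  have huQ : MemLp u 2 Q := hXQ.sub (memLp_const c)
  -- transfer to ν
  have hPd : ∀ f : Ω → ℝ, ∫ ω, f ω ∂P = ∫ ω, p ω * f ω ∂ν := fun f => by
    rw [hP]; exact dens_integral ν hpm hp0 f
  have hQd : ∀ f : Ω → ℝ, ∫ ω, f ω ∂Q = ∫ ω, q ω * f ω ∂ν := fun f => by
    rw [hQ]; exact dens_integral ν hqm hq0 f
  have hPint : ∀ f : Ω → ℝ, Integrable f P → Integrable (fun ω => p ω * f ω) ν := by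
    intro f h; rw [hP] at h; exact (dens_integrable ν hpm hp0 f).mp h
  have hQint : ∀ f : Ω → ℝ, Integrable f Q → Integrable (fun ω => q ω * f ω) ν := by
    intro f h; rw [hQ] at h; exact (dens_integrable ν hqm hq0 f).mp h
  -- a.e. equivalence of zero sets
  rw [hP, hQ] at hPQ hQP
  have hpq0 : ∀ᵐ ω ∂ν, p ω = 0 → q ω = 0 := dens_zero ν hpm hqm hq0 hQP
  have hqp0 : ∀ᵐ ω ∂ν, q ω = 0 → p ω = 0 := dens_zero ν hqm hpm hp0 hPQ
  have hiff : ∀ᵐ ω ∂ν, (p ω = 0 ↔ q ω = 0) := by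
    filter_upwards [hpq0, hqp0] with ω h1 h2; exact ⟨h1, h2⟩
  -- pointwise bound
  set g : Ω → ℝ := fun ω => (p ω - q ω)^2/(p ω + q ω) with hgdef
  have hptwise : ∀ᵐ ω ∂ν, 2 * g ω ≤
      Real.log (p ω / q ω) * p ω + Real.log (q ω / p ω) * q ω := by
    filter_upwards [hiff] with ω hω
    have h := aux_key (hp0 ω) (hq0 ω) hω
    have e : 2 * g ω = 2*(p ω - q ω)^2/(p ω + q ω) := by
      simp only [hgdef]; ring
    linarith [e ▸ h]
  have hg_nonneg : ∀ ω, 0 ≤ g ω := fun ω =>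
    div_nonneg (sq_nonneg _) (by linarith [hp0 ω, hq0 ω])
  have hg_meas : Measurable g := ((hpm.sub hqm).pow_const 2).div (hpm.add hqm)
  have hkl_int : Integrable
      (fun ω => Real.log (p ω / q ω) * p ω + Real.log (q ω / p ω) * q ω) ν :=
    hklPQ.add hklQP
  have hg_int : Integrable g ν := by
    apply hkl_int.mono' hg_meas.aestronglyMeasurable
    filter_upwards [hptwise] with ω h
    rw [Real.norm_eq_abs, abs_of_nonneg (hg_nonneg ω)]
    linarith [hg_nonneg ω]
  have hg_S : 2 * ∫ ω, g ω ∂ν ≤ S := by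
    have h1 : ∫ ω, 2 * g ω ∂ν ≤
        ∫ ω, Real.log (p ω / q ω) * p ω + Real.log (q ω / p ω) * q ω ∂ν :=
      integral_mono_ae (hg_int.const_mul 2) hkl_int hptwise
    rw [integral_const_mul, integral_add hklPQ hklQP] at h1
    exact h1
  have hg_int0 : 0 ≤ ∫ ω, g ω ∂ν := integral_nonneg hg_nonneg
  -- Cauchy-Schwarz setup
  set F : Ω → ℝ := fun ω => u ω * Real.sqrt (p ω + q ω) with hFdef
  set G : Ω → ℝ := fun ω => (p ω - q ω) / Real.sqrt (p ω + q ω) with hGdef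
  have hFG : ∀ ω, F ω * G ω = p ω * u ω - q ω * u ω := by
    intro ω
    by_cases hs : p ω + q ω = 0
    · have hp' : p ω = 0 := by linarith [hp0 ω, hq0 ω]
      have hq' : q ω = 0 := by linarith [hp0 ω, hq0 ω]
      simp [hFdef, hGdef, hp', hq']
    · have hs' : 0 < p ω + q ω :=
        lt_of_le_of_ne (by linarith [hp0 ω, hq0 ω]) (Ne.symm hs)
      have hsqrt : Real.sqrt (p ω + q ω) ≠ 0 := Real.sqrt_ne_zero'.mpr hs'
      simp only [hFdef, hGdef]
      field_simp
  have hF2 : ∀ ω, F ω^2 = p ω * u ω^2 + q ω * u ω^2 := by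
    intro ω
    simp only [hFdef]
    rw [mul_pow, Real.sq_sqrt (by linarith [hp0 ω, hq0 ω] : 0 ≤ p ω + q ω)]
    ring
  have hG2 : ∀ ω, G ω^2 = g ω := by
    intro ω
    simp only [hGdef, hgdef]
    rw [div_pow, Real.sq_sqrt (by linarith [hp0 ω, hq0 ω] : 0 ≤ p ω + q ω)]
  -- integrabilities over ν
  have hpu2 : Integrable (fun ω => p ω * u ω^2) ν := hPint _ huP.integrable_sq
  have hqu2 : Integrable (fun ω => q ω * u ω^2) ν := hQint _ huQ.integrable_sq
  have hpu : Integrable (fun ω => p ω * u ω) ν := hPint _ (huP.integrable one_le_two)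
  have hqu : Integrable (fun ω => q ω * u ω) ν := hQint _ (huQ.integrable one_le_two)
  have hF2int : Integrable (fun ω => F ω^2) ν := by
    have e : (fun ω => F ω^2) = fun ω => p ω * u ω^2 + q ω * u ω^2 := funext hF2
    rw [e]; exact hpu2.add hqu2
  have hG2int : Integrable (fun ω => G ω^2) ν := by
    have e : (fun ω => G ω^2) = g := funext hG2
    rw [e]; exact hg_int
  have hFGm : AEStronglyMeasurable (fun ω => F ω * G ω) ν := by
    have e : (fun ω => F ω * G ω) = fun ω => p ω * u ω - q ω * u ω := funext hFG
    rw [e]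
    exact hpu.aestronglyMeasurable.sub hqu.aestronglyMeasurable
  have hCS := aux_cs hFGm hF2int hG2int
  -- compute the three integrals
  have hPu : ∫ ω, u ω ∂P = μ1 - c := by
    simp only [hudef]
    rw [integral_sub hXint_P (integrable_const c), integral_const]
    simp [hμ1]
  have hQu : ∫ ω, u ω ∂Q = μ2 - c := by
    simp only [hudef]
    rw [integral_sub hXint_Q (integrable_const c), integral_const]
    simp [hμ2]
  have e1 : ∫ ω, F ω * G ω ∂ν = μ1 - μ2 := by
    have e : (fun ω => F ω * G ω) = fun ω => p ω * u ω - q ω * u ω := funext hFG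
    rw [e, integral_sub hpu hqu, ← hPd u, ← hQd u, hPu, hQu]
    ring
  have hvar : ∀ (R : Measure Ω) [IsProbabilityMeasure R], MemLp X 2 R →
      ∫ ω, u ω^2 ∂(R) = variance X R + (∫ ω, X ω ∂(R) - c)^2 := by
    intro R _ hXR
    have hXint : Integrable X R := hXR.integrable one_le_two
    have hXsq : Integrable (fun ω => X ω^2) R := hXR.integrable_sq
    have h1 : ∫ ω, u ω^2 ∂(R) = ∫ ω, X ω^2 ∂(R) - 2*c*(∫ ω, X ω ∂(R)) + c^2 := by
      have e : (fun ω => u ω ^2) = fun ω => (X ω^2 - 2*c*X ω) + c^2 :=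
        funext fun ω => by simp only [hudef]; ring
      have i2 : Integrable (fun ω => 2*c*X ω) R := hXint.const_mul (2*c)
      have i1 : Integrable (fun ω => X ω^2 - 2*c*X ω) R := hXsq.sub i2
      rw [e, integral_add i1 (integrable_const _), integral_sub hXsq i2,
        integral_const_mul, integral_const]
      simp
    have h2 := variance_eq_sub hXR
    simp only [Pi.pow_apply] at h2
    rw [h1, h2]
    ring
  have e2 : ∫ ω, F ω^2 ∂ν
      = variance X P + (μ1 - c)^2 + (variance X Q + (μ2 - c)^2) := by
    have e : (fun ω => F ω^2) = fun ω => p ω * u ω^2 + q ω * u ω^2 := funext hF2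
    rw [e, integral_add hpu2 hqu2, ← hPd (fun ω => u ω^2), ← hQd (fun ω => u ω^2),
      hvar P hXP, hvar Q hXQ]
  have e3 : ∫ ω, G ω^2 ∂ν = ∫ ω, g ω ∂ν := by
    have e : (fun ω => G ω^2) = g := funext hG2
    rw [e]
  rw [e1, e2, e3] at hCS
  clear_value S μ1 μ2 c u g F G
  clear hPd hQd hPint hQint hpq0 hqp0 hiff hptwise hg_meas hg_int hkl_int
  clear hklPQ hklQP hg_nonneg hFG hF2 hG2 hpu2 hqu2 hpu hqu hF2int hG2int hFGm
  clear hPu hQu hvar e1 e2 e3 hP hQ hPQ hQP hXint_P hXint_Q huP huQ hXP hXQ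
  clear hudef hgdef hFdef hGdef hμ1 hμ2 hSdef
  generalize hBdef : ∫ ω, g ω ∂ν = B at hCS hg_S hg_int0
  -- final algebra
  set M := max (variance X P) (variance X Q) with hM
  have hVP : variance X P ≤ M := le_max_left _ _
  have hVQ : variance X Q ≤ M := le_max_right _ _
  have hM0 : 0 ≤ M := le_trans (variance_nonneg X P) hVP
  clear_value M
  have hc1 : μ1 - c = (μ1 - μ2)/2 := by rw [hc]; ring
  have hc2 : μ2 - c = -((μ1 - μ2)/2) := by rw [hc]; ring
  rw [hc1, hc2] at hCS
  set d := μ1 - μ2 with hd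
  clear_value d
  have hstep : (variance X P + (d/2)^2 + (variance X Q + (-(d/2))^2)) * B
      ≤ (2*M + d^2/2) * (S/2) := by
    apply mul_le_mul _ (by linarith) hg_int0 (by nlinarith [sq_nonneg d])
    nlinarith [sq_nonneg d]
  have hK : d^2 ≤ M*S + d^2*S/4 := by nlinarith [hCS, hstep]
  have hS0 : 0 < S := hpos
  have hrw : 1/S - 1/4 = (1*4 - S*1)/(S*4) := div_sub_div 1 1 hS0.ne' (by norm_num)
  rw [hrw, show (1*4 - S*1) = 4 - S from by ring, ← mul_div_assoc,
    div_le_iff₀ (by positivity : (0:ℝ) < S*4)]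
  nlinarith [hK]
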